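/- Let R be an algebraic Kähler curvature tensor on a complex Hermitian vector space V with dim V ≥ 2, and let H(Z) = R(Z,Z̄,Z,Z̄). If the unit vector Z maximizes H over the unit sphere of V, then for every unit vector W orthogonal to Z one has H(Z) ≥ 2 R(Z,Z̄,W,W̄). -/

import Mathlib

open Complex

/-- if a unit vector `Z` maximizes the holomorphic sectional
curvature `H(Z) = R(Z,Z̄,Z,Z̄)` of an algebraic Kähler curvature tensor over the
unit sphere, then `H(Z) ≥ 2 R(Z,Z̄,W,W̄)` for every unit `W ⟂ Z`. -/
theorem stmt_1 {V : Type*} [NormedAddCommGroup V] [InnerProductSpace ℂ V]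
    (hdim : 2 ≤ Module.finrank ℂ V)
    (R : V → V → V → V → ℂ)
    (hlin1 : ∀ (a b : ℂ) (z z' w x y : V),
      R (a • z + b • z') w x y = a * R z w x y + b * R z' w x y)
    (hlin3 : ∀ (a b : ℂ) (z w x x' y : V),
      R z w (a • x + b • x') y = a * R z w x y + b * R z w x' y)
    (hconj2 : ∀ (a b : ℂ) (z w w' x y : V),
      R z (a • w + b • w') x y
        = (starRingEnd ℂ a) * R z w x y + (starRingEnd ℂ b) * R z w' x y)
    (hconj4 : ∀ (a b : ℂ) (z w x y y' : V),
      R z w x (a • y + b • y')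
        = (starRingEnd ℂ a) * R z w x y + (starRingEnd ℂ b) * R z w x y')
    (hpair : ∀ z w x y : V, R z w x y = R x y z w)
    (hsym13 : ∀ z w x y : V, R z w x y = R x w z y)
    (hreal : ∀ v : V, (R v v v v).im = 0)
    (Z : V) (hZ : ‖Z‖ = 1)
    (hmax : ∀ W : V, ‖W‖ = 1 → (R W W W W).re ≤ (R Z Z Z Z).re)
    (W : V) (hW : ‖W‖ = 1) (horth : (inner ℂ Z W : ℂ) = 0) :
    2 * (R Z Z W W).re ≤ (R Z Z Z Z).re := by
  -- single-slot homogeneity and additivity lemmas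
  have s1 : ∀ (c : ℂ) (z w x y : V), R (c • z) w x y = c * R z w x y := by
    intro c z w x y; have h := hlin1 c 0 z 0 w x y; simpa using h
  have s2 : ∀ (c : ℂ) (z w x y : V), R z (c • w) x y = (starRingEnd ℂ c) * R z w x y := by
    intro c z w x y; have h := hconj2 c 0 z w 0 x y; simpa using h
  have s3 : ∀ (c : ℂ) (z w x y : V), R z w (c • x) y = c * R z w x y := by
    intro c z w x y; have h := hlin3 c 0 z w x 0 y; simpa using h
  have s4 : ∀ (c : ℂ) (z w x y : V), R z w x (c • y) = (starRingEnd ℂ c) * R z w x y := by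
    intro c z w x y; have h := hconj4 c 0 z w x y 0; simpa using h
  have a1 : ∀ (z z' w x y : V), R (z + z') w x y = R z w x y + R z' w x y := by
    intro z z' w x y; have h := hlin1 1 1 z z' w x y; simpa using h
  have a2 : ∀ (z w w' x y : V), R z (w + w') x y = R z w x y + R z w' x y := by
    intro z w w' x y; have h := hconj2 1 1 z w w' x y; simpa using h
  have a3 : ∀ (z w x x' y : V), R z w (x + x') y = R z w x y + R z w x' y := by
    intro z w x x' y; have h := hlin3 1 1 z w x x' y; simpa using h
  have a4 : ∀ (z w x y y' : V), R z w x (y + y') = R z w x y + R z w x y' := by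
    intro z w x y y'; have h := hconj4 1 1 z w x y y'; simpa using h
  -- full multilinear expansion of H(Z + cW)
  have expand : ∀ c : ℂ, R (Z + c•W) (Z + c•W) (Z + c•W) (Z + c•W) =
      R Z Z Z Z
      + (starRingEnd ℂ c) * R Z W Z Z + (starRingEnd ℂ c) * R Z Z Z W
      + c * R W Z Z Z + c * R Z Z W Z
      + c * (starRingEnd ℂ c) * (R W W Z Z + R W Z Z W + R Z W W Z + R Z Z W W)
      + c * c * R W Z W Z + (starRingEnd ℂ c) * (starRingEnd ℂ c) * R Z W Z W
      + c * c * (starRingEnd ℂ c) * (R W W W Z + R W Z W W)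
      + c * (starRingEnd ℂ c) * (starRingEnd ℂ c) * (R Z W W W + R W W Z W)
      + c * c * (starRingEnd ℂ c) * (starRingEnd ℂ c) * R W W W W := by
    intro c
    simp only [a1, a2, a3, a4, s1, s2, s3, s4]
    ring
  -- the four mixed terms each equal R Z Z W W
  have hm1 : R W W Z Z = R Z Z W W := hpair W W Z Z
  have hm2 : R W Z Z W = R Z Z W W := hsym13 W Z Z W
  have hm3 : R Z W W Z = R Z Z W W := (hpair Z W W Z).trans (hsym13 W Z Z W)
  -- norm of Z + cW
  have hnorm : ∀ c : ℂ, ‖Z + c • W‖ ^ 2 = 1 + ‖c‖ ^ 2 := by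
    intro c
    rw [@norm_add_sq ℂ]
    simp [hZ, hW, norm_smul, inner_smul_right, horth]
  -- scaling of the max bound
  have key : ∀ (c : ℝ) (u : V), R ((c:ℂ) • u) ((c:ℂ) • u) ((c:ℂ) • u) ((c:ℂ) • u)
      = (((c^4 : ℝ)) : ℂ) * R u u u u := by
    intro c u
    rw [s1, s2, s3, s4, Complex.conj_ofReal]
    push_cast
    ring
  have hmax' : ∀ X : V, X ≠ 0 → (R X X X X).re ≤ ‖X‖ ^ 4 * (R Z Z Z Z).re := by
    intro X hX
    have hn : ‖X‖ ≠ 0 := norm_ne_zero_iff.mpr hX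
    set u : V := ((‖X‖ : ℂ))⁻¹ • X with hu
    have hun : ‖u‖ = 1 := by
      rw [hu, norm_smul]; simp [hn]
    have hXu : ((‖X‖ : ℝ) : ℂ) • u = X := smul_inv_smul₀ (by exact_mod_cast hn) X
    have h1 := key ‖X‖ u
    rw [hXu] at h1
    rw [h1, Complex.re_ofReal_mul]
    have := hmax u hun
    nlinarith [pow_pos (norm_pos_iff.mpr hX) 4]
  set A := (R Z Z Z Z).re with hA
  set B := (R W W W W).re with hB
  set a := (R Z Z W W).re with ha
  -- bound for each of the four vectors
  have hbound : ∀ c : ℂ, ‖c‖^2 ≤ 1 →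
      (R (Z + c•W) (Z + c•W) (Z + c•W) (Z + c•W)).re ≤ (1 + ‖c‖^2)^2 * A := by
    intro c hc
    have hne : Z + c•W ≠ 0 := by
      intro h
      have := hnorm c
      rw [h] at this
      simp at this
      nlinarith [sq_nonneg ‖c‖]
    have := hmax' (Z + c•W) hne
    have h4 : ‖Z + c•W‖^4 = (1 + ‖c‖^2)^2 := by
      rw [show (4:ℕ) = 2*2 from rfl, pow_mul, hnorm c]
    rw [h4] at this
    exact this
  -- the four-sum identity
  have ident : ∀ t : ℝ,
      R (Z + ((t:ℂ))•W) (Z + ((t:ℂ))•W) (Z + ((t:ℂ))•W) (Z + ((t:ℂ))•W)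
      + R (Z + (-(t:ℂ))•W) (Z + (-(t:ℂ))•W) (Z + (-(t:ℂ))•W) (Z + (-(t:ℂ))•W)
      + R (Z + ((t:ℂ)*I)•W) (Z + ((t:ℂ)*I)•W) (Z + ((t:ℂ)*I)•W) (Z + ((t:ℂ)*I)•W)
      + R (Z + (-((t:ℂ)*I))•W) (Z + (-((t:ℂ)*I))•W) (Z + (-((t:ℂ)*I))•W) (Z + (-((t:ℂ)*I))•W)
      = ((4:ℝ):ℂ) * R Z Z Z Z + ((16*t^2:ℝ):ℂ) * R Z Z W W + ((4*t^4:ℝ):ℂ) * R W W W W := by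
    intro t
    rw [expand, expand, expand, expand, hm1, hm2, hm3]
    simp only [map_mul, map_neg, Complex.conj_ofReal, Complex.conj_I]
    push_cast
    linear_combination (2*(t:ℂ)^2*(R W Z W Z + R Z W Z W) - 2*(t:ℂ)^2*(4 * R Z Z W W)
      + 2*(t:ℂ)^4*(I^2-1)* R W W W W) * Complex.I_sq
  -- norms of the four coefficients
  have hnc : ∀ t : ℝ, ‖(t:ℂ)‖^2 = t^2 := by
    intro t; rw [Complex.norm_real]; exact sq_abs t
  have hncI : ∀ t : ℝ, ‖(t:ℂ)*I‖^2 = t^2 := by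
    intro t; rw [norm_mul, Complex.norm_I, mul_one, Complex.norm_real]; exact sq_abs t
  -- combined inequality
  have main : ∀ t : ℝ, t^2 ≤ 1 → 4*A + 16*t^2*a + 4*t^4*B ≤ 4*(1+t^2)^2*A := by
    intro t ht
    have b1 := hbound ((t:ℂ)) (by rw [hnc]; exact ht)
    have b2 := hbound (-(t:ℂ)) (by rw [norm_neg, hnc]; exact ht)
    have b3 := hbound ((t:ℂ)*I) (by rw [hncI]; exact ht)
    have b4 := hbound (-((t:ℂ)*I)) (by rw [norm_neg, hncI]; exact ht)
    rw [hnc] at b1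
    rw [norm_neg, hnc] at b2
    rw [hncI] at b3
    rw [norm_neg, hncI] at b4
    have hsumre : 4*A + 16*t^2*a + 4*t^4*B
        = (((4:ℝ):ℂ) * R Z Z Z Z + ((16*t^2:ℝ):ℂ) * R Z Z W W + ((4*t^4:ℝ):ℂ) * R W W W W).re := by
      simp only [Complex.add_re, Complex.re_ofReal_mul, ← hA, ← hB, ← ha]
    rw [hsumre, ← ident t]
    simp only [Complex.add_re]
    linarith [b1, b2, b3, b4]
  -- conclude by letting t → 0
  have hBA : B ≤ A := hmax W hW
  by_contra hcon
  push_neg at hcon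
  set ε : ℝ := 2*a - A with hε
  have hεpos : 0 < ε := by simp [hε, ha, hA]; linarith
  set C : ℝ := A - B with hC
  have hCpos : 0 < C + 1 := by simp [hC]; linarith
  set t : ℝ := min 1 (Real.sqrt (ε/(8*(C+1)))) with htdef
  have hsq : 0 < Real.sqrt (ε/(8*(C+1))) :=
    Real.sqrt_pos.mpr (div_pos hεpos (by linarith))
  have htpos : 0 < t := lt_min one_pos hsq
  have ht1 : t ≤ 1 := min_le_left _ _
  have ht2 : t^2 ≤ ε/(8*(C+1)) := by
    calc t^2 ≤ (Real.sqrt (ε/(8*(C+1))))^2 := by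
          apply pow_le_pow_left₀ (le_of_lt htpos) (min_le_right _ _)
      _ = ε/(8*(C+1)) := Real.sq_sqrt (le_of_lt (div_pos hεpos (by linarith)))
  have hm := main t (by nlinarith)
  -- 16 t² a ≤ 8 A t² + 4 t⁴ (A - B), so 16 a ≤ 8 A + 4 t² C
  have h16 : 16 * a ≤ 8 * A + 4 * t^2 * C := by
    have ht2pos : 0 < t^2 := pow_pos htpos 2
    nlinarith [hm]
  have ht4 : 4 * t^2 * C ≤ 4 * t^2 * (C+1) := by nlinarith [pow_pos htpos 2]
  have : 4 * t^2 * (C+1) ≤ ε/2 := by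
    have := mul_le_mul_of_nonneg_right ht2 (le_of_lt hCpos)
    calc 4 * t^2 * (C+1) ≤ 4 * (ε/(8*(C+1))) * (C+1) := by nlinarith
      _ = ε/2 := by field_simp; ring
  -- so 16 a ≤ 8 A + ε/2, i.e. 2a ≤ A + ε/16·... contradiction with ε = 2a − A
  clear_value t ε C A B a
  have h5 : 4 * t^2 * C ≤ ε/2 := le_trans ht4 this
  have h6 : 16 * a ≤ 8 * A + ε/2 := by linarith
  rw [hε] at h6
  linarith
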